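/- Let C(t) be a symmetric positive definite solution of Ċ(t) = −α C(t)AᵀΓ⁻¹A C(t), and suppose λ(t) > 0 with unit eigenvector v(t) satisfy C(t)v(t) = λ(t)v(t), both differentiable in t. Then λ̇(t) = −α λ(t)² ‖Av(t)‖_Γ². In particular, λ(t) ≥ λ(0)/(α‖Γ^{−1/2}A‖² λ(0) t + 1) for all t ≥ 0. -/

import Mathlib

open Matrix

theorem eigenvalue_dynamics {n m : ℕ} (α : ℝ) (hα : 0 < α)
    (A : Matrix (Fin m) (Fin n) ℝ)
    (Γ : Matrix (Fin m) (Fin m) ℝ) (hΓ : Γ.PosDef)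
    (C : ℝ → Matrix (Fin n) (Fin n) ℝ)
    (hCpos : ∀ t : ℝ, (C t).PosDef)
    (hC : ∀ t : ℝ, ∀ i j : Fin n,
      HasDerivAt (fun s => C s i j) ((-α • (C t * (Aᵀ * Γ⁻¹ * A) * C t)) i j) t)
    (lam : ℝ → ℝ) (v : ℝ → Fin n → ℝ)
    (hlampos : ∀ t, 0 < lam t)
    (heig : ∀ t, C t *ᵥ v t = lam t • v t)
    (hunit : ∀ t, v t ⬝ᵥ v t = 1)
    (hlamdiff : Differentiable ℝ lam)
    (hvdiff : ∀ i : Fin n, Differentiable ℝ (fun t => v t i))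
    -- `K = ‖Γ^{-1/2}A‖²`, the square of the operator norm:
    (K : ℝ)
    (hK : K = sSup {r : ℝ | ∃ z : Fin n → ℝ, z ⬝ᵥ z = 1 ∧
      r = (A *ᵥ z) ⬝ᵥ (Γ⁻¹ *ᵥ (A *ᵥ z))}) :
    (∀ t : ℝ,
      HasDerivAt lam (-(α * lam t ^ 2 * ((A *ᵥ v t) ⬝ᵥ (Γ⁻¹ *ᵥ (A *ᵥ v t))))) t) ∧
    (∀ t : ℝ, 0 ≤ t → lam 0 / (α * K * lam 0 * t + 1) ≤ lam t) := by
  set M : Matrix (Fin n) (Fin n) ℝ := Aᵀ * Γ⁻¹ * A with hMdef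
  -- C is symmetric
  have hCsym : ∀ t, (C t)ᵀ = C t := fun t => (hCpos t).1
  -- v ᵥ* C t = lam t • v t
  have hvC : ∀ t, v t ᵥ* C t = lam t • v t := by
    intro t
    rw [← hCsym t, vecMul_transpose, heig]
  -- lam as a quadratic form
  have hlam_eq : ∀ t, v t ⬝ᵥ (C t *ᵥ v t) = lam t := by
    intro t
    rw [heig, dotProduct_smul, hunit, smul_eq_mul, mul_one]
  -- Part 1
  have part1 : ∀ t : ℝ,
      HasDerivAt lam (-(α * lam t ^ 2 * ((A *ᵥ v t) ⬝ᵥ (Γ⁻¹ *ᵥ (A *ᵥ v t))))) t := by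
    intro t
    set w : Fin n → ℝ := fun i => deriv (fun s => v s i) t with hwdef
    have hvd : ∀ i, HasDerivAt (fun s => v s i) (w i) t :=
      fun i => ((hvdiff i) t).hasDerivAt
    -- w ⬝ᵥ v t = 0
    have hwv : w ⬝ᵥ v t = 0 := by
      have h1 : HasDerivAt (fun s => v s ⬝ᵥ v s)
          (∑ i, (w i * v t i + v t i * w i)) t := by
        have := HasDerivAt.fun_sum (fun i (_ : i ∈ Finset.univ) => (hvd i).mul (hvd i))
        simpa [dotProduct] using this
      have h2 : HasDerivAt (fun s => v s ⬝ᵥ v s) 0 t := by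
        have : (fun s => v s ⬝ᵥ v s) = fun _ => (1 : ℝ) := funext fun s => hunit s
        rw [this]; exact hasDerivAt_const t 1
      have h3 := h1.unique h2
      have h4 : (2 : ℝ) * (w ⬝ᵥ v t) = 0 := by
        rw [← h3, dotProduct, Finset.mul_sum]
        exact Finset.sum_congr rfl (fun i _ => by ring)
      linarith
    have hvw : v t ⬝ᵥ w = 0 := by rw [dotProduct_comm]; exact hwv
    set Cd : Matrix (Fin n) (Fin n) ℝ := -α • (C t * M * C t) with hCddef
    -- derivative of the quadratic form
    have hg : HasDerivAt (fun s => ∑ i, ∑ j, v s i * (C s i j * v s j))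
        (∑ i, ∑ j, (w i * (C t i j * v t j) +
          v t i * (Cd i j * v t j + C t i j * w j))) t := by
      refine HasDerivAt.fun_sum fun i _ => HasDerivAt.fun_sum fun j _ => ?_
      exact (hvd i).mul ((hC t i j).mul (hvd j))
    have hfun : (fun s => ∑ i, ∑ j, v s i * (C s i j * v s j)) = lam := by
      funext s
      rw [← hlam_eq s]
      simp [dotProduct, mulVec, Finset.mul_sum]
    rw [hfun] at hg
    -- identify the derivative value
    have hval : (∑ i, ∑ j, (w i * (C t i j * v t j) +
          v t i * (Cd i j * v t j + C t i j * w j)))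
        = w ⬝ᵥ (C t *ᵥ v t) + v t ⬝ᵥ (Cd *ᵥ v t) + v t ⬝ᵥ (C t *ᵥ w) := by
      simp only [dotProduct, mulVec, Finset.mul_sum, ← Finset.sum_add_distrib]
      refine Finset.sum_congr rfl fun i _ => ?_
      refine Finset.sum_congr rfl fun j _ => ?_
      ring
    rw [hval] at hg
    have e1 : w ⬝ᵥ (C t *ᵥ v t) = 0 := by
      rw [heig, dotProduct_smul, hwv, smul_eq_mul, mul_zero]
    have e3 : v t ⬝ᵥ (C t *ᵥ w) = 0 := by
      rw [dotProduct_mulVec, hvC, smul_dotProduct, hvw, smul_eq_mul, mul_zero]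
    have e2 : v t ⬝ᵥ (Cd *ᵥ v t)
        = -(α * lam t ^ 2 * ((A *ᵥ v t) ⬝ᵥ (Γ⁻¹ *ᵥ (A *ᵥ v t)))) := by
      have hCMC : (C t * M * C t) *ᵥ v t = C t *ᵥ (M *ᵥ (C t *ᵥ v t)) := by
        rw [mulVec_mulVec, mulVec_mulVec]
      have hMv : v t ⬝ᵥ ((C t * M * C t) *ᵥ v t)
          = lam t ^ 2 * (v t ⬝ᵥ (M *ᵥ v t)) := by
        rw [hCMC, heig, mulVec_smul, mulVec_smul, dotProduct_smul,
          dotProduct_mulVec, hvC, smul_dotProduct, smul_eq_mul, smul_eq_mul]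
        ring
      have hMform : v t ⬝ᵥ (M *ᵥ v t) = (A *ᵥ v t) ⬝ᵥ (Γ⁻¹ *ᵥ (A *ᵥ v t)) := by
        rw [hMdef, ← mulVec_mulVec, ← mulVec_mulVec, dotProduct_mulVec,
          vecMul_transpose]
      rw [hCddef, smul_mulVec, dotProduct_smul, hMv, hMform, smul_eq_mul]
      ring
    rw [e1, e2, e3] at hg
    simpa using hg
  refine ⟨part1, ?_⟩
  -- Part 2
  set Q : (Fin n → ℝ) → ℝ := fun z => (A *ᵥ z) ⬝ᵥ (Γ⁻¹ *ᵥ (A *ᵥ z)) with hQdef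
  have hQnonneg : ∀ z, 0 ≤ Q z := by
    intro z
    have := hΓ.inv.posSemidef.dotProduct_mulVec_nonneg (A *ᵥ z)
    simpa only [star_trivial] using this
  -- the sup set
  set S : Set ℝ := {r : ℝ | ∃ z : Fin n → ℝ, z ⬝ᵥ z = 1 ∧ r = Q z} with hSdef
  have hSimage : S = Q '' {z | z ⬝ᵥ z = 1} := by
    ext r
    constructor
    · rintro ⟨z, hz1, hz2⟩; exact ⟨z, hz1, hz2.symm⟩
    · rintro ⟨z, hz1, hz2⟩; exact ⟨z, hz1, hz2.symm⟩
  have hbdd : BddAbove S := by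
    rw [hSimage]
    have hclosed : IsClosed {z : Fin n → ℝ | z ⬝ᵥ z = 1} := by
      have hc : Continuous fun z : Fin n → ℝ => z ⬝ᵥ z := by
        simp only [dotProduct]; fun_prop
      exact isClosed_eq hc continuous_const
    have hbo : Bornology.IsBounded {z : Fin n → ℝ | z ⬝ᵥ z = 1} := by
      apply Metric.isBounded_closedBall (x := (0 : Fin n → ℝ)) (r := 1) |>.subset
      intro z hz
      rw [Metric.mem_closedBall, dist_zero_right]
      rw [pi_norm_le_iff_of_nonneg zero_le_one]
      intro i
      rw [Real.norm_eq_abs, abs_le_one_iff_mul_self_le_one]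
      calc z i * z i ≤ ∑ j, z j * z j :=
            Finset.single_le_sum (fun j _ => mul_self_nonneg (z j)) (Finset.mem_univ i)
        _ = 1 := hz
    have hcompact : IsCompact {z : Fin n → ℝ | z ⬝ᵥ z = 1} :=
      Metric.isCompact_of_isClosed_isBounded hclosed hbo
    have hQcont : Continuous Q := by
      simp only [hQdef, mulVec, dotProduct]; fun_prop
    exact (hcompact.image hQcont).bddAbove
  have hQleK : ∀ z, z ⬝ᵥ z = 1 → Q z ≤ K := by
    intro z hz
    rw [hK]
    exact le_csSup hbdd ⟨z, hz, rfl⟩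
  have hKnonneg : 0 ≤ K := (hQnonneg (v 0)).trans (hQleK (v 0) (hunit 0))
  -- the comparison function
  set h : ℝ → ℝ := fun t => (lam t)⁻¹ - α * K * t with hhdef
  have hh : ∀ t, HasDerivAt h (α * Q (v t) - α * K) t := by
    intro t
    have h1 : HasDerivAt (fun s => (lam s)⁻¹) (α * Q (v t)) t := by
      have h0 := (part1 t).inv (hlampos t).ne'
      have hl2 : lam t ^ 2 ≠ 0 := pow_ne_zero 2 (hlampos t).ne'
      have heq : - -(α * lam t ^ 2 * ((A *ᵥ v t) ⬝ᵥ (Γ⁻¹ *ᵥ (A *ᵥ v t)))) / lam t ^ 2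
          = α * Q (v t) := by
        rw [neg_neg, div_eq_iff hl2]
        ring
      rwa [heq] at h0
    have h2 : HasDerivAt (fun s : ℝ => α * K * s) (α * K) t := by
      simpa using (hasDerivAt_id t).const_mul (α * K)
    exact h1.sub h2
  have hanti : Antitone h := by
    apply antitone_of_deriv_nonpos
    · exact fun t => (hh t).differentiableAt
    · intro t
      rw [(hh t).deriv]
      have := hQleK (v t) (hunit t)
      nlinarith
  intro t ht
  have hmono := hanti ht
  simp only [hhdef] at hmono
  -- (lam t)⁻¹ ≤ (lam 0)⁻¹ + α*K*t
  have hineq : (lam t)⁻¹ ≤ (lam 0)⁻¹ + α * K * t := by linarith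
  have hd : 0 < α * K * lam 0 * t + 1 := by
    have : 0 ≤ α * K * lam 0 * t :=
      mul_nonneg (mul_nonneg (mul_nonneg hα.le hKnonneg) (hlampos 0).le) ht
    linarith
  rw [div_le_iff₀ hd]
  have hlt := hlampos t
  have hl0 := hlampos 0
  have i1 : lam t * (lam t)⁻¹ = 1 := mul_inv_cancel₀ hlt.ne'
  have i2 : lam 0 * (lam 0)⁻¹ = 1 := mul_inv_cancel₀ hl0.ne'
  nlinarith [mul_le_mul_of_nonneg_left hineq (mul_pos hlt hl0).le]
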